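/- arXiv:1507.08255 — 4 statements merged into one kernel-verified Lean document; each statement's English description precedes it below -/
import Mathlib

section
/- Let θ ∈ [0, 2π) be a rational multiple of π such that cos θ has algebraic degree 2 over ℚ. Then 2cos θ is a root of a monic integer quadratic x² + ax + b with both roots of absolute value less than 2, and consequently cos θ ∈ {±1/√2, ±√3/2, ±1/4 ± √5/4}. -/
open Real Polynomial


private lemma myc1 (x : ℝ) : Real.cos (2*π - x) = Real.cos x := by
  simp [Real.cos_sub]

private lemma myc2 (x : ℝ) : Real.cos (π + x) = -Real.cos x := by
  simp [Real.cos_add]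

private lemma sqrt2h : Real.sqrt 2 / 2 = 1 / Real.sqrt 2 := by
  have h := Real.mul_self_sqrt (show (0:ℝ) ≤ 2 by norm_num)
  have h0 : (0:ℝ) < Real.sqrt 2 := Real.sqrt_pos.mpr (by norm_num)
  rw [div_eq_div_iff (by norm_num) h0.ne', one_mul, h]

private lemma h5sq : Real.sqrt 5 * Real.sqrt 5 = 5 :=
  Real.mul_self_sqrt (by norm_num)

private lemma cv_0_1 : Real.cos (π*(0:ℝ)) = 1 := by norm_num
private lemma cv_1_1 : Real.cos (π*(1:ℝ)) = -1 := by rw [mul_one, Real.cos_pi]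
private lemma cv_1_2 : Real.cos (π*(1/2:ℝ)) = 0 := by
  rw [show π*(1/2:ℝ) = π/2 by ring, Real.cos_pi_div_two]
private lemma cv_3_2 : Real.cos (π*(3/2:ℝ)) = 0 := by
  rw [show π*(3/2:ℝ) = 2*π - π/2 by ring, myc1, Real.cos_pi_div_two]
private lemma cv_1_3 : Real.cos (π*(1/3:ℝ)) = 1/2 := by
  rw [show π*(1/3:ℝ) = π/3 by ring, Real.cos_pi_div_three]
private lemma cv_5_3 : Real.cos (π*(5/3:ℝ)) = 1/2 := by
  rw [show π*(5/3:ℝ) = 2*π - π/3 by ring, myc1, Real.cos_pi_div_three]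
private lemma cv_2_3 : Real.cos (π*(2/3:ℝ)) = -(1/2) := by
  rw [show π*(2/3:ℝ) = π - π/3 by ring, Real.cos_pi_sub, Real.cos_pi_div_three]
private lemma cv_4_3 : Real.cos (π*(4/3:ℝ)) = -(1/2) := by
  rw [show π*(4/3:ℝ) = π + π/3 by ring, myc2, Real.cos_pi_div_three]
private lemma cv_1_4 : Real.cos (π*(1/4:ℝ)) = 1 / Real.sqrt 2 := by
  rw [show π*(1/4:ℝ) = π/4 by ring, Real.cos_pi_div_four, sqrt2h]
private lemma cv_3_4 : Real.cos (π*(3/4:ℝ)) = -(1 / Real.sqrt 2) := by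
  rw [show π*(3/4:ℝ) = π - π/4 by ring, Real.cos_pi_sub, Real.cos_pi_div_four, sqrt2h]
private lemma cv_5_4 : Real.cos (π*(5/4:ℝ)) = -(1 / Real.sqrt 2) := by
  rw [show π*(5/4:ℝ) = π + π/4 by ring, myc2, Real.cos_pi_div_four, sqrt2h]
private lemma cv_7_4 : Real.cos (π*(7/4:ℝ)) = 1 / Real.sqrt 2 := by
  rw [show π*(7/4:ℝ) = 2*π - π/4 by ring, myc1, Real.cos_pi_div_four, sqrt2h]
private lemma cv_1_6 : Real.cos (π*(1/6:ℝ)) = Real.sqrt 3 / 2 := by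
  rw [show π*(1/6:ℝ) = π/6 by ring, Real.cos_pi_div_six]
private lemma cv_5_6 : Real.cos (π*(5/6:ℝ)) = -(Real.sqrt 3 / 2) := by
  rw [show π*(5/6:ℝ) = π - π/6 by ring, Real.cos_pi_sub, Real.cos_pi_div_six]
private lemma cv_7_6 : Real.cos (π*(7/6:ℝ)) = -(Real.sqrt 3 / 2) := by
  rw [show π*(7/6:ℝ) = π + π/6 by ring, myc2, Real.cos_pi_div_six]
private lemma cv_11_6 : Real.cos (π*(11/6:ℝ)) = Real.sqrt 3 / 2 := by
  rw [show π*(11/6:ℝ) = 2*π - π/6 by ring, myc1, Real.cos_pi_div_six]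
private lemma cv_1_5 : Real.cos (π*(1/5:ℝ)) = 1/4 + Real.sqrt 5 / 4 := by
  rw [show π*(1/5:ℝ) = π/5 by ring, Real.cos_pi_div_five]; ring
private lemma cv_2_5 : Real.cos (π*(2/5:ℝ)) = -(1/4) + Real.sqrt 5 / 4 := by
  rw [show π*(2/5:ℝ) = 2*(π/5) by ring, Real.cos_two_mul, Real.cos_pi_div_five]
  linear_combination (1/8) * h5sq
private lemma cv_3_5 : Real.cos (π*(3/5:ℝ)) = 1/4 - Real.sqrt 5 / 4 := by
  rw [show π*(3/5:ℝ) = π - π*(2/5) by ring, Real.cos_pi_sub, cv_2_5]; ring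
private lemma cv_4_5 : Real.cos (π*(4/5:ℝ)) = -(1/4) - Real.sqrt 5 / 4 := by
  rw [show π*(4/5:ℝ) = π - π*(1/5) by ring, Real.cos_pi_sub, cv_1_5]; ring
private lemma cv_6_5 : Real.cos (π*(6/5:ℝ)) = -(1/4) - Real.sqrt 5 / 4 := by
  rw [show π*(6/5:ℝ) = π + π*(1/5) by ring, myc2, cv_1_5]; ring
private lemma cv_7_5 : Real.cos (π*(7/5:ℝ)) = 1/4 - Real.sqrt 5 / 4 := by
  rw [show π*(7/5:ℝ) = π + π*(2/5) by ring, myc2, cv_2_5]; ring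
private lemma cv_8_5 : Real.cos (π*(8/5:ℝ)) = -(1/4) + Real.sqrt 5 / 4 := by
  rw [show π*(8/5:ℝ) = 2*π - π*(2/5) by ring, myc1, cv_2_5]
private lemma cv_9_5 : Real.cos (π*(9/5:ℝ)) = 1/4 + Real.sqrt 5 / 4 := by
  rw [show π*(9/5:ℝ) = 2*π - π*(1/5) by ring, myc1, cv_1_5]

private lemma not_deg2 {x : ℝ} (r : ℚ) (h : x = (r:ℝ)) :
    (minpoly ℚ x).natDegree ≠ 2 := by
  subst h
  rw [show ((r:ℝ)) = algebraMap ℚ ℝ r from rfl, minpoly.eq_X_sub_C]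
  simp



set_option maxRecDepth 10000 in
private lemma totient_key : ∀ m, m < 121 → Nat.totient m ≤ 4 → m ≤ 12 := by decide

private lemma tot_le_twelve (n : ℕ) (hn : 0 < n) (h : n.totient ≤ 4) : n ≤ 12 := by
  have h120 : n ∣ 120 := by
    rw [Nat.dvd_iff_prime_pow_dvd_dvd]
    intro p k hp hpk
    rcases Nat.eq_zero_or_pos k with rfl | hk
    · simpa using one_dvd _
    have htd : (p^k).totient ∣ n.totient := Nat.totient_dvd_of_dvd hpk
    have hle : (p^k).totient ≤ 4 :=
      le_trans (Nat.le_of_dvd (Nat.totient_pos.mpr hn) htd) h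
    rw [Nat.totient_prime_pow hp hk] at hle
    have hp2 : 2 ≤ p := hp.two_le
    have h1 : 0 < p^(k-1) := pow_pos (by omega) _
    have hple : p ≤ 5 := by
      have := Nat.le_mul_of_pos_left (p-1) h1
      omega
    interval_cases p
    · norm_num at hle
      have hk3 : k ≤ 3 := by
        by_contra hc
        push_neg at hc
        have : 2^3 ≤ 2^(k-1) := Nat.pow_le_pow_right (by norm_num) (by omega)
        omega
      exact dvd_trans (pow_dvd_pow 2 hk3) (by norm_num)
    · have hk1 : k ≤ 1 := by
        by_contra hc
        push_neg at hc
        have : 3^1 ≤ 3^(k-1) := Nat.pow_le_pow_right (by norm_num) (by omega)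
        omega
      exact dvd_trans (pow_dvd_pow 3 hk1) (by norm_num)
    · exact absurd hp (by norm_num)
    · have hk1 : k ≤ 1 := by
        by_contra hc
        push_neg at hc
        have : 5^1 ≤ 5^(k-1) := Nat.pow_le_pow_right (by norm_num) (by omega)
        omega
      exact dvd_trans (pow_dvd_pow 5 hk1) (by norm_num)
  have h120' : n ≤ 120 := Nat.le_of_dvd (by norm_num) h120
  exact totient_key n (by omega) h



private lemma quad_of_roots (x y : ℝ) (a b : ℤ) (hsum : x + y = -(a:ℝ))
    (hprod : x * y = (b:ℝ)) (h1 : |x| < 2) (h2 : |y| < 2) :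
    x^2 + (a:ℝ)*x + (b:ℝ) = 0 ∧
      ∀ z : ℂ, z^2 + (a:ℂ)*z + (b:ℂ) = 0 → ‖z‖ < 2 := by
  have hsC : (x:ℂ) + (y:ℂ) = -(a:ℂ) := by exact_mod_cast hsum
  have hpC : (x:ℂ) * (y:ℂ) = (b:ℂ) := by exact_mod_cast hprod
  constructor
  · linear_combination x*hsum - hprod
  · intro z hz
    have hfac : (z - x) * (z - y) = 0 := by
      linear_combination hz - z*hsC + hpC
    rcases mul_eq_zero.mp hfac with h | h
    · rw [sub_eq_zero.mp h, Complex.norm_real, Real.norm_eq_abs]; exact h1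
    · rw [sub_eq_zero.mp h, Complex.norm_real, Real.norm_eq_abs]; exact h2

set_option maxHeartbeats 1000000 in
private lemma exists_part (θ : ℝ)
    (hval : Real.cos θ = 1 / Real.sqrt 2 ∨ Real.cos θ = -(1 / Real.sqrt 2) ∨
      Real.cos θ = Real.sqrt 3 / 2 ∨ Real.cos θ = -(Real.sqrt 3 / 2) ∨
      Real.cos θ = 1 / 4 + Real.sqrt 5 / 4 ∨
      Real.cos θ = 1 / 4 - Real.sqrt 5 / 4 ∨
      Real.cos θ = -(1 / 4) + Real.sqrt 5 / 4 ∨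
      Real.cos θ = -(1 / 4) - Real.sqrt 5 / 4) :
    ∃ a b : ℤ,
      (2 * Real.cos θ) ^ 2 + (a : ℝ) * (2 * Real.cos θ) + (b : ℝ) = 0 ∧
      ∀ z : ℂ, z ^ 2 + (a : ℂ) * z + (b : ℂ) = 0 → ‖z‖ < 2 := by
  have h2sq := Real.mul_self_sqrt (show (0:ℝ) ≤ 2 by norm_num)
  have h3sq := Real.mul_self_sqrt (show (0:ℝ) ≤ 3 by norm_num)
  have h2nn := Real.sqrt_nonneg 2
  have h3nn := Real.sqrt_nonneg 3
  have h5nn := Real.sqrt_nonneg 5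
  rcases hval with h | h | h | h | h | h | h | h
  · have hx : 2 * Real.cos θ = Real.sqrt 2 := by
      rw [h]; field_simp; rw [sq, h2sq]
    rw [hx]
    exact ⟨0, -2, quad_of_roots _ (-Real.sqrt 2) _ _ (by push_cast; ring)
      (by push_cast; linear_combination -h2sq)
      (by rw [abs_lt]; constructor <;> nlinarith)
      (by rw [abs_lt]; constructor <;> nlinarith)⟩
  · have hx : 2 * Real.cos θ = -Real.sqrt 2 := by
      rw [h]; field_simp; rw [sq, h2sq]
    rw [hx]
    exact ⟨0, -2, quad_of_roots _ (Real.sqrt 2) _ _ (by push_cast; ring)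
      (by push_cast; linear_combination -h2sq)
      (by rw [abs_lt]; constructor <;> nlinarith)
      (by rw [abs_lt]; constructor <;> nlinarith)⟩
  · have hx : 2 * Real.cos θ = Real.sqrt 3 := by rw [h]; ring
    rw [hx]
    exact ⟨0, -3, quad_of_roots _ (-Real.sqrt 3) _ _ (by push_cast; ring)
      (by push_cast; linear_combination -h3sq)
      (by rw [abs_lt]; constructor <;> nlinarith)
      (by rw [abs_lt]; constructor <;> nlinarith)⟩
  · have hx : 2 * Real.cos θ = -Real.sqrt 3 := by rw [h]; ring
    rw [hx]
    exact ⟨0, -3, quad_of_roots _ (Real.sqrt 3) _ _ (by push_cast; ring)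
      (by push_cast; linear_combination -h3sq)
      (by rw [abs_lt]; constructor <;> nlinarith)
      (by rw [abs_lt]; constructor <;> nlinarith)⟩
  · have hx : 2 * Real.cos θ = (1 + Real.sqrt 5)/2 := by rw [h]; ring
    rw [hx]
    exact ⟨-1, -1, quad_of_roots _ ((1 - Real.sqrt 5)/2) _ _ (by push_cast; ring)
      (by push_cast; linear_combination (-(1:ℝ)/4)*h5sq)
      (by rw [abs_lt]; constructor <;> nlinarith [h5sq, h5nn])
      (by rw [abs_lt]; constructor <;> nlinarith [h5sq, h5nn])⟩
  · have hx : 2 * Real.cos θ = (1 - Real.sqrt 5)/2 := by rw [h]; ring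
    rw [hx]
    exact ⟨-1, -1, quad_of_roots _ ((1 + Real.sqrt 5)/2) _ _ (by push_cast; ring)
      (by push_cast; linear_combination (-(1:ℝ)/4)*h5sq)
      (by rw [abs_lt]; constructor <;> nlinarith [h5sq, h5nn])
      (by rw [abs_lt]; constructor <;> nlinarith [h5sq, h5nn])⟩
  · have hx : 2 * Real.cos θ = (-1 + Real.sqrt 5)/2 := by rw [h]; ring
    rw [hx]
    exact ⟨1, -1, quad_of_roots _ ((-1 - Real.sqrt 5)/2) _ _ (by push_cast; ring)
      (by push_cast; linear_combination (-(1:ℝ)/4)*h5sq)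
      (by rw [abs_lt]; constructor <;> nlinarith [h5sq, h5nn])
      (by rw [abs_lt]; constructor <;> nlinarith [h5sq, h5nn])⟩
  · have hx : 2 * Real.cos θ = (-1 - Real.sqrt 5)/2 := by rw [h]; ring
    rw [hx]
    exact ⟨1, -1, quad_of_roots _ ((-1 + Real.sqrt 5)/2) _ _ (by push_cast; ring)
      (by push_cast; linear_combination (-(1:ℝ)/4)*h5sq)
      (by rw [abs_lt]; constructor <;> nlinarith [h5sq, h5nn])
      (by rw [abs_lt]; constructor <;> nlinarith [h5sq, h5nn])⟩

private lemma exists_quad_rel (θ : ℝ)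
    (hdeg : (minpoly ℚ (Real.cos θ)).natDegree = 2) :
    ∃ r s : ℚ, Real.cos θ^2 + (r:ℝ)*Real.cos θ + (s:ℝ) = 0 := by
  have hint : IsIntegral ℚ (Real.cos θ) := by
    by_contra hni
    rw [minpoly.eq_zero hni] at hdeg
    simp at hdeg
  have hmon : (minpoly ℚ (Real.cos θ)).Monic := minpoly.monic hint
  set m : Polynomial ℚ := minpoly ℚ (Real.cos θ) with hmdef
  have hsub : (m - X^2).natDegree ≤ 1 := by
    rw [Polynomial.natDegree_le_iff_coeff_eq_zero]
    intro j hj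
    rw [Polynomial.coeff_sub, Polynomial.coeff_X_pow]
    by_cases hj2 : j = 2
    · subst hj2
      have hlc := hmon.coeff_natDegree
      rw [hdeg] at hlc
      rw [hlc]
      simp
    · have hz : m.coeff j = 0 := Polynomial.coeff_eq_zero_of_natDegree_lt (by omega)
      simp [hz, hj2]
  refine ⟨(m - X^2).coeff 1, (m - X^2).coeff 0, ?_⟩
  have hexp : m = X^2 + Polynomial.C ((m - X^2).coeff 1) * X
      + Polynomial.C ((m - X^2).coeff 0) := by
    have h2' := Polynomial.eq_X_add_C_of_natDegree_le_one hsub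
    linear_combination h2'
  have h0' := minpoly.aeval ℚ (Real.cos θ)
  rw [← hmdef, hexp] at h0'
  simpa using h0'

set_option maxHeartbeats 1000000 in
private lemma theta_structure (θ : ℝ) (h0 : 0 ≤ θ) (h2 : θ < 2 * Real.pi)
    (r s : ℚ) (hc : Real.cos θ^2 + (r:ℝ)*Real.cos θ + (s:ℝ) = 0)
    (p q : ℤ) (hq : q ≠ 0) (hθ : θ = ((p : ℝ) / (q : ℝ)) * Real.pi) :
    ∃ (d : ℕ) (k : ℤ), 0 < d ∧ Nat.totient d ≤ 4 ∧ (0:ℤ) ≤ k ∧ k < (d:ℤ) ∧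
      θ = 2*π*(k:ℝ)/(d:ℝ) := by
  have hcC : (Real.cos θ:ℂ)^2 + (r:ℂ)*(Real.cos θ:ℂ) + (s:ℂ) = 0 := by
    have := congrArg (fun x : ℝ => (x:ℂ)) hc
    push_cast at this
    exact_mod_cast this
  set z : ℂ := Complex.exp (θ * Complex.I) with hzdef
  have hz0 : z ≠ 0 := Complex.exp_ne_zero _
  have hsum2 : z + z⁻¹ = 2*(Real.cos θ:ℂ) := by
    have h1 : z = Complex.cos θ + Complex.sin θ * Complex.I :=
      (Complex.cos_add_sin_I θ).symm
    have h2' : z⁻¹ = Complex.cos θ - Complex.sin θ * Complex.I := by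
      rw [hzdef, ← Complex.exp_neg, ← neg_mul, ← Complex.cos_sub_sin_I]
    rw [Complex.ofReal_cos, h2', h1]
    ring
  have hzz : z * z⁻¹ = 1 := mul_inv_cancel₀ hz0
  have h2c' : z^2 + 1 - 2*(Real.cos θ:ℂ)*z = 0 := by
    linear_combination z * hsum2 - hzz
  have hqn0 : q.natAbs ≠ 0 := Int.natAbs_ne_zero.mpr hq
  have hqR : ((q:ℝ)) ≠ 0 := Int.cast_ne_zero.mpr hq
  have hNθ : ∃ mm : ℤ, ((2*q.natAbs : ℕ) : ℝ) * θ = (mm:ℝ)*(2*π) := by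
    rcases le_or_gt 0 q with h | h
    · refine ⟨p, ?_⟩
      rw [hθ]
      have hcast : ((q.natAbs : ℕ) : ℝ) = (q:ℝ) := by
        rw [Nat.cast_natAbs]; exact_mod_cast abs_of_nonneg h
      push_cast [hcast]
      field_simp
    · refine ⟨-p, ?_⟩
      rw [hθ]
      have hcast : ((q.natAbs : ℕ) : ℝ) = -(q:ℝ) := by
        rw [Nat.cast_natAbs]; exact_mod_cast abs_of_nonpos h.le
      push_cast [hcast]
      field_simp
  have hzN : z ^ (2*q.natAbs) = 1 := by
    obtain ⟨mm, hm⟩ := hNθ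
    have hC : ((2*q.natAbs : ℕ) : ℂ) * (↑θ * Complex.I) = (mm:ℂ) * (2*↑π*Complex.I) := by
      have := congrArg (fun x : ℝ => (x:ℂ)) hm
      push_cast at this ⊢
      linear_combination Complex.I * this
    rw [hzdef, ← Complex.exp_nat_mul, hC, Complex.exp_int_mul_two_pi_mul_I]
  have hfin : IsOfFinOrder z :=
    isOfFinOrder_iff_pow_eq_one.mpr ⟨2*q.natAbs, by omega, hzN⟩
  set d : ℕ := orderOf z with hddef
  have hd : 0 < d := hfin.orderOf_pos
  have hprim : IsPrimitiveRoot z d := IsPrimitiveRoot.orderOf z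
  have hzd : z ^ d = 1 := pow_orderOf_eq_one z
  have hcyc := Polynomial.cyclotomic_eq_minpoly_rat hprim hd
  have htot : Nat.totient d ≤ 4 := by
    set P : Polynomial ℚ :=
      X^4 + Polynomial.C (2*r) * X^3 + Polynomial.C (4*s+2) * X^2
        + Polynomial.C (2*r) * X + Polynomial.C 1 with hPdef
    have hPne : P ≠ 0 := by
      intro hP
      have := congrArg (fun Q : Polynomial ℚ => Q.coeff 4) hP
      simp only [hPdef, Polynomial.coeff_add, Polynomial.coeff_C_mul,
        Polynomial.coeff_X_pow, Polynomial.coeff_X, Polynomial.coeff_C,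
        Polynomial.coeff_zero] at this
      norm_num at this
    have hPz : Polynomial.aeval z P = 0 := by
      have hev : (Polynomial.aeval z) P
          = z^4 + (2*(r:ℂ))*z^3 + (4*(s:ℂ)+2)*z^2 + (2*(r:ℂ))*z + 1 := by
        rw [hPdef]
        simp only [map_add, map_mul, map_pow, Polynomial.aeval_X,
          Polynomial.aeval_C, map_one, eq_ratCast]
        push_cast
        ring
      rw [hev]
      linear_combination (4*z^2)*hcC
        + (z^2 + 1 + 2*(Real.cos θ:ℂ)*z + 2*(r:ℂ)*z)*h2c'
    have hdle := minpoly.degree_le_of_ne_zero ℚ z hPne hPz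
    have hnle : (minpoly ℚ z).natDegree ≤ P.natDegree :=
      Polynomial.natDegree_le_natDegree hdle
    have hP4 : P.natDegree ≤ 4 := by
      rw [hPdef]
      compute_degree
    have hEq : Nat.totient d = (minpoly ℚ z).natDegree := by
      rw [← hcyc, Polynomial.natDegree_cyclotomic]
    omega
  -- θ = 2πk/d
  have hexp1 : Complex.exp ((d:ℂ) * (↑θ * Complex.I)) = 1 := by
    rw [Complex.exp_nat_mul, ← hzdef]
    exact hzd
  obtain ⟨k, hk⟩ := Complex.exp_eq_one_iff.mp hexp1
  have hreal : (d:ℝ) * θ = (k:ℝ) * (2*π) := by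
    have h1 : (((d:ℝ) * θ : ℝ) : ℂ) * Complex.I
        = (((k:ℝ) * (2*π) : ℝ) : ℂ) * Complex.I := by
      push_cast
      linear_combination hk
    have h2' := mul_right_cancel₀ Complex.I_ne_zero h1
    exact_mod_cast h2'
  have hd0R : (0:ℝ) < (d:ℝ) := by exact_mod_cast hd
  have hθd : θ = 2*π*(k:ℝ)/(d:ℝ) := by
    field_simp
    linarith [hreal]
  have hk0R : (0:ℝ) ≤ (k:ℝ) := by
    nlinarith [Real.pi_pos, mul_nonneg hd0R.le h0]
  have hkdR : (k:ℝ) < (d:ℝ) := by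
    nlinarith [Real.pi_pos, mul_pos hd0R (sub_pos.mpr h2)]
  exact ⟨d, k, hd, htot, by exact_mod_cast hk0R, by exact_mod_cast hkdR, hθd⟩

set_option maxHeartbeats 2000000 in
private lemma cos_enum (θ : ℝ) (d : ℕ) (k : ℤ) (hd : 0 < d) (hd12 : d ≤ 12)
    (htot : Nat.totient d ≤ 4) (hk0 : (0:ℤ) ≤ k) (hkd : k < (d:ℤ))
    (hθd : θ = 2*π*(k:ℝ)/(d:ℝ))
    (hdeg : (minpoly ℚ (Real.cos θ)).natDegree = 2) :
    Real.cos θ = 1 / Real.sqrt 2 ∨ Real.cos θ = -(1 / Real.sqrt 2) ∨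
      Real.cos θ = Real.sqrt 3 / 2 ∨ Real.cos θ = -(Real.sqrt 3 / 2) ∨
      Real.cos θ = 1 / 4 + Real.sqrt 5 / 4 ∨
      Real.cos θ = 1 / 4 - Real.sqrt 5 / 4 ∨
      Real.cos θ = -(1 / 4) + Real.sqrt 5 / 4 ∨
      Real.cos θ = -(1 / 4) - Real.sqrt 5 / 4 := by
  interval_cases d
  · interval_cases k
    · have hx : θ = π*(0:ℝ) := by rw [hθd]; push_cast; ring
      exact absurd hdeg (not_deg2 (1 : ℚ) (by rw [hx, cv_0_1]; norm_num))
  · interval_cases k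
    · have hx : θ = π*(0:ℝ) := by rw [hθd]; push_cast; ring
      exact absurd hdeg (not_deg2 (1 : ℚ) (by rw [hx, cv_0_1]; norm_num))
    · have hx : θ = π*(1:ℝ) := by rw [hθd]; push_cast; ring
      exact absurd hdeg (not_deg2 (-1 : ℚ) (by rw [hx, cv_1_1]; norm_num))
  · interval_cases k
    · have hx : θ = π*(0:ℝ) := by rw [hθd]; push_cast; ring
      exact absurd hdeg (not_deg2 (1 : ℚ) (by rw [hx, cv_0_1]; norm_num))
    · have hx : θ = π*(2/3:ℝ) := by rw [hθd]; push_cast; ring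
      exact absurd hdeg (not_deg2 (-1/2 : ℚ) (by rw [hx, cv_2_3]; norm_num))
    · have hx : θ = π*(4/3:ℝ) := by rw [hθd]; push_cast; ring
      exact absurd hdeg (not_deg2 (-1/2 : ℚ) (by rw [hx, cv_4_3]; norm_num))
  · interval_cases k
    · have hx : θ = π*(0:ℝ) := by rw [hθd]; push_cast; ring
      exact absurd hdeg (not_deg2 (1 : ℚ) (by rw [hx, cv_0_1]; norm_num))
    · have hx : θ = π*(1/2:ℝ) := by rw [hθd]; push_cast; ring
      exact absurd hdeg (not_deg2 (0 : ℚ) (by rw [hx, cv_1_2]; norm_num))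
    · have hx : θ = π*(1:ℝ) := by rw [hθd]; push_cast; ring
      exact absurd hdeg (not_deg2 (-1 : ℚ) (by rw [hx, cv_1_1]; norm_num))
    · have hx : θ = π*(3/2:ℝ) := by rw [hθd]; push_cast; ring
      exact absurd hdeg (not_deg2 (0 : ℚ) (by rw [hx, cv_3_2]; norm_num))
  · interval_cases k
    · have hx : θ = π*(0:ℝ) := by rw [hθd]; push_cast; ring
      exact absurd hdeg (not_deg2 (1 : ℚ) (by rw [hx, cv_0_1]; norm_num))
    · have hx : θ = π*(2/5:ℝ) := by rw [hθd]; push_cast; ring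
      rw [hx, cv_2_5]
      tauto
    · have hx : θ = π*(4/5:ℝ) := by rw [hθd]; push_cast; ring
      rw [hx, cv_4_5]
      tauto
    · have hx : θ = π*(6/5:ℝ) := by rw [hθd]; push_cast; ring
      rw [hx, cv_6_5]
      tauto
    · have hx : θ = π*(8/5:ℝ) := by rw [hθd]; push_cast; ring
      rw [hx, cv_8_5]
      tauto
  · interval_cases k
    · have hx : θ = π*(0:ℝ) := by rw [hθd]; push_cast; ring
      exact absurd hdeg (not_deg2 (1 : ℚ) (by rw [hx, cv_0_1]; norm_num))
    · have hx : θ = π*(1/3:ℝ) := by rw [hθd]; push_cast; ring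
      exact absurd hdeg (not_deg2 (1/2 : ℚ) (by rw [hx, cv_1_3]; norm_num))
    · have hx : θ = π*(2/3:ℝ) := by rw [hθd]; push_cast; ring
      exact absurd hdeg (not_deg2 (-1/2 : ℚ) (by rw [hx, cv_2_3]; norm_num))
    · have hx : θ = π*(1:ℝ) := by rw [hθd]; push_cast; ring
      exact absurd hdeg (not_deg2 (-1 : ℚ) (by rw [hx, cv_1_1]; norm_num))
    · have hx : θ = π*(4/3:ℝ) := by rw [hθd]; push_cast; ring
      exact absurd hdeg (not_deg2 (-1/2 : ℚ) (by rw [hx, cv_4_3]; norm_num))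
    · have hx : θ = π*(5/3:ℝ) := by rw [hθd]; push_cast; ring
      exact absurd hdeg (not_deg2 (1/2 : ℚ) (by rw [hx, cv_5_3]; norm_num))
  · exact absurd htot (by decide)
  · interval_cases k
    · have hx : θ = π*(0:ℝ) := by rw [hθd]; push_cast; ring
      exact absurd hdeg (not_deg2 (1 : ℚ) (by rw [hx, cv_0_1]; norm_num))
    · have hx : θ = π*(1/4:ℝ) := by rw [hθd]; push_cast; ring
      rw [hx, cv_1_4]
      tauto
    · have hx : θ = π*(1/2:ℝ) := by rw [hθd]; push_cast; ring
      exact absurd hdeg (not_deg2 (0 : ℚ) (by rw [hx, cv_1_2]; norm_num))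
    · have hx : θ = π*(3/4:ℝ) := by rw [hθd]; push_cast; ring
      rw [hx, cv_3_4]
      tauto
    · have hx : θ = π*(1:ℝ) := by rw [hθd]; push_cast; ring
      exact absurd hdeg (not_deg2 (-1 : ℚ) (by rw [hx, cv_1_1]; norm_num))
    · have hx : θ = π*(5/4:ℝ) := by rw [hθd]; push_cast; ring
      rw [hx, cv_5_4]
      tauto
    · have hx : θ = π*(3/2:ℝ) := by rw [hθd]; push_cast; ring
      exact absurd hdeg (not_deg2 (0 : ℚ) (by rw [hx, cv_3_2]; norm_num))
    · have hx : θ = π*(7/4:ℝ) := by rw [hθd]; push_cast; ring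
      rw [hx, cv_7_4]
      tauto
  · exact absurd htot (by decide)
  · interval_cases k
    · have hx : θ = π*(0:ℝ) := by rw [hθd]; push_cast; ring
      exact absurd hdeg (not_deg2 (1 : ℚ) (by rw [hx, cv_0_1]; norm_num))
    · have hx : θ = π*(1/5:ℝ) := by rw [hθd]; push_cast; ring
      rw [hx, cv_1_5]
      tauto
    · have hx : θ = π*(2/5:ℝ) := by rw [hθd]; push_cast; ring
      rw [hx, cv_2_5]
      tauto
    · have hx : θ = π*(3/5:ℝ) := by rw [hθd]; push_cast; ring
      rw [hx, cv_3_5]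
      tauto
    · have hx : θ = π*(4/5:ℝ) := by rw [hθd]; push_cast; ring
      rw [hx, cv_4_5]
      tauto
    · have hx : θ = π*(1:ℝ) := by rw [hθd]; push_cast; ring
      exact absurd hdeg (not_deg2 (-1 : ℚ) (by rw [hx, cv_1_1]; norm_num))
    · have hx : θ = π*(6/5:ℝ) := by rw [hθd]; push_cast; ring
      rw [hx, cv_6_5]
      tauto
    · have hx : θ = π*(7/5:ℝ) := by rw [hθd]; push_cast; ring
      rw [hx, cv_7_5]
      tauto
    · have hx : θ = π*(8/5:ℝ) := by rw [hθd]; push_cast; ring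
      rw [hx, cv_8_5]
      tauto
    · have hx : θ = π*(9/5:ℝ) := by rw [hθd]; push_cast; ring
      rw [hx, cv_9_5]
      tauto
  · exact absurd htot (by decide)
  · interval_cases k
    · have hx : θ = π*(0:ℝ) := by rw [hθd]; push_cast; ring
      exact absurd hdeg (not_deg2 (1 : ℚ) (by rw [hx, cv_0_1]; norm_num))
    · have hx : θ = π*(1/6:ℝ) := by rw [hθd]; push_cast; ring
      rw [hx, cv_1_6]
      tauto
    · have hx : θ = π*(1/3:ℝ) := by rw [hθd]; push_cast; ring
      exact absurd hdeg (not_deg2 (1/2 : ℚ) (by rw [hx, cv_1_3]; norm_num))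
    · have hx : θ = π*(1/2:ℝ) := by rw [hθd]; push_cast; ring
      exact absurd hdeg (not_deg2 (0 : ℚ) (by rw [hx, cv_1_2]; norm_num))
    · have hx : θ = π*(2/3:ℝ) := by rw [hθd]; push_cast; ring
      exact absurd hdeg (not_deg2 (-1/2 : ℚ) (by rw [hx, cv_2_3]; norm_num))
    · have hx : θ = π*(5/6:ℝ) := by rw [hθd]; push_cast; ring
      rw [hx, cv_5_6]
      tauto
    · have hx : θ = π*(1:ℝ) := by rw [hθd]; push_cast; ring
      exact absurd hdeg (not_deg2 (-1 : ℚ) (by rw [hx, cv_1_1]; norm_num))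
    · have hx : θ = π*(7/6:ℝ) := by rw [hθd]; push_cast; ring
      rw [hx, cv_7_6]
      tauto
    · have hx : θ = π*(4/3:ℝ) := by rw [hθd]; push_cast; ring
      exact absurd hdeg (not_deg2 (-1/2 : ℚ) (by rw [hx, cv_4_3]; norm_num))
    · have hx : θ = π*(3/2:ℝ) := by rw [hθd]; push_cast; ring
      exact absurd hdeg (not_deg2 (0 : ℚ) (by rw [hx, cv_3_2]; norm_num))
    · have hx : θ = π*(5/3:ℝ) := by rw [hθd]; push_cast; ring
      exact absurd hdeg (not_deg2 (1/2 : ℚ) (by rw [hx, cv_5_3]; norm_num))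
    · have hx : θ = π*(11/6:ℝ) := by rw [hθd]; push_cast; ring
      rw [hx, cv_11_6]
      tauto

/-- If `θ ∈ [0, 2π)` is a rational multiple of `π` and `cos θ` has algebraic
degree 2 over `ℚ`, then `2cos θ` is a root of a monic integer quadratic
`x² + ax + b` whose (complex) roots all have absolute value less than 2, and
consequently `cos θ ∈ {±1/√2, ±√3/2, ±1/4 ± √5/4}`. -/
theorem cos_of_rat_mul_pi_degree_two (θ : ℝ) (h0 : 0 ≤ θ) (h2 : θ < 2 * Real.pi)
    (p q : ℤ) (hq : q ≠ 0) (hθ : θ = ((p : ℝ) / (q : ℝ)) * Real.pi)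
    (hdeg : (minpoly ℚ (Real.cos θ)).natDegree = 2) :
    (∃ a b : ℤ,
        (2 * Real.cos θ) ^ 2 + (a : ℝ) * (2 * Real.cos θ) + (b : ℝ) = 0 ∧
        ∀ z : ℂ, z ^ 2 + (a : ℂ) * z + (b : ℂ) = 0 → ‖z‖ < 2) ∧
      (Real.cos θ = 1 / Real.sqrt 2 ∨ Real.cos θ = -(1 / Real.sqrt 2) ∨
        Real.cos θ = Real.sqrt 3 / 2 ∨ Real.cos θ = -(Real.sqrt 3 / 2) ∨
        Real.cos θ = 1 / 4 + Real.sqrt 5 / 4 ∨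
        Real.cos θ = 1 / 4 - Real.sqrt 5 / 4 ∨
        Real.cos θ = -(1 / 4) + Real.sqrt 5 / 4 ∨
        Real.cos θ = -(1 / 4) - Real.sqrt 5 / 4) := by
  obtain ⟨r, s, hc⟩ := exists_quad_rel θ hdeg
  obtain ⟨d, k, hd, htot, hk0, hkd, hθd⟩ :=
    theta_structure θ h0 h2 r s hc p q hq hθ
  have hd12 : d ≤ 12 := tot_le_twelve d hd htot
  have hval := cos_enum θ d k hd hd12 htot hk0 hkd hθd hdeg
  exact ⟨exists_part θ hval, hval⟩
end

section
/- Let θ ∈ (0, 2π), θ ∉ {π/2, π, 3π/2}, and let X₁₂ = θE₁₂, X₁₃ = θE₁₃, X₂₃ = θE₂₃ in 𝔰𝔬(3). Then the three elements log(e^{X₁₂}e^{X₁₃}), log(e^{X₁₂}e^{X₂₃}), log(e^{X₁₃}e^{X₂₃}) (given by the BCH formula for 𝔰𝔬(3)) are linearly independent, i.e., form a basis of 𝔰𝔬(3). -/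
open Real Matrix

/-- The BCH element `BCH(X,Y) = αX + βY + γ[X,Y]` for orthogonal
`X, Y ∈ 𝔰𝔬(3)`, with the explicit coefficients
`α = (sin⁻¹(d)/d)(a/θ)`, `β = (sin⁻¹(d)/d)(b/φ)`, `γ = (sin⁻¹(d)/d)(c/(θφ))`,
where `a = sin θ cos²(φ/2)`, `b = sin φ cos²(θ/2)`, `c = (1/2)sin θ sin φ`,
`d = √(a²+b²+c²)`, `θ = ‖X‖`, `φ = ‖Y‖`. -/
noncomputable def bchSO3 (X Y : Matrix (Fin 3) (Fin 3) ℝ) :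
    Matrix (Fin 3) (Fin 3) ℝ :=
  let θ := Real.sqrt ((1 / 2) * Matrix.trace (Xᵀ * X))
  let φ := Real.sqrt ((1 / 2) * Matrix.trace (Yᵀ * Y))
  let a := Real.sin θ * Real.cos (φ / 2) ^ 2
  let b := Real.sin φ * Real.cos (θ / 2) ^ 2
  let c := (1 / 2) * Real.sin θ * Real.sin φ
  let d := Real.sqrt (a ^ 2 + b ^ 2 + c ^ 2)
  (Real.arcsin d / d * (a / θ)) • X + (Real.arcsin d / d * (b / φ)) • Y +
    (Real.arcsin d / d * (c / (θ * φ))) • (X * Y - Y * X)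

lemma key_ne (θ : ℝ) (h0 : 0 < θ) (h2 : θ < 2 * Real.pi)
    (h3 : θ ≠ 3 * Real.pi / 2) :
    2 * Real.cos (θ / 2) ^ 3 + Real.sin (θ / 2) ≠ 0 := by
  have pi_pos := Real.pi_pos
  intro h
  have hs : 0 < Real.sin (θ / 2) :=
    Real.sin_pos_of_pos_of_lt_pi (by linarith) (by linarith)
  have hsq : Real.sin (θ / 2) ^ 2 + Real.cos (θ / 2) ^ 2 = 1 :=
    Real.sin_sq_add_cos_sq _
  set s := Real.sin (θ / 2)
  set co := Real.cos (θ / 2)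
  have h1 : s = -2 * co ^ 3 := by linarith
  have h6 : 4 * co ^ 6 + co ^ 2 - 1 = 0 := by nlinarith [h1, hsq]
  have hfac : (2 * co ^ 2 - 1) * (2 * co ^ 4 + co ^ 2 + 1) = 0 := by
    linear_combination h6
  have hpos : 0 < 2 * co ^ 4 + co ^ 2 + 1 := by positivity
  have hco2 : co ^ 2 = 1 / 2 := by
    rcases mul_eq_zero.mp hfac with h' | h'
    · linarith
    · linarith
  have hco : co = -s := by nlinarith [h1, hco2]
  have hsin : Real.sin θ = -1 := by
    rw [show θ = 2 * (θ / 2) by ring, Real.sin_two_mul]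
    nlinarith [hco, hsq, hco2]
  have hcos : Real.cos θ = 0 := by
    rw [show θ = 2 * (θ / 2) by ring, Real.cos_two_mul]
    rw [hco2]; ring
  have hone : Real.cos (θ - 3 * Real.pi / 2) = 1 := by
    rw [Real.cos_sub, show (3 : ℝ) * Real.pi / 2 = Real.pi + Real.pi / 2 by ring,
      Real.cos_add, Real.sin_add, hsin, hcos]
    simp
  have := (Real.cos_eq_one_iff_of_lt_of_lt (by linarith) (by linarith)).mp hone
  exact h3 (by linarith)

lemma bch_smul (θ a c d K : ℝ) (hθ : 0 < θ)
    (ha : a = Real.sin θ * Real.cos (θ / 2) ^ 2)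
    (hc : c = 1 / 2 * Real.sin θ * Real.sin θ)
    (hd : d = Real.sqrt (a ^ 2 + a ^ 2 + c ^ 2))
    (hK : K = Real.arcsin d / d)
    (P Q : Matrix (Fin 3) (Fin 3) ℝ)
    (hP : Matrix.trace (Pᵀ * P) = 2) (hQ : Matrix.trace (Qᵀ * Q) = 2) :
    bchSO3 (θ • P) (θ • Q) =
      (K * a) • P + (K * a) • Q + (K * c) • (P * Q - Q * P) := by
  subst hK hd hc ha
  have hsqP : Real.sqrt ((1 / 2) * Matrix.trace ((θ • P)ᵀ * (θ • P))) = θ := by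
    rw [Matrix.transpose_smul, Matrix.smul_mul, Matrix.mul_smul,
      Matrix.trace_smul, Matrix.trace_smul, hP]
    simp only [smul_eq_mul]
    rw [show (1 / 2 : ℝ) * (θ * (θ * 2)) = θ ^ 2 by ring, Real.sqrt_sq hθ.le]
  have hsqQ : Real.sqrt ((1 / 2) * Matrix.trace ((θ • Q)ᵀ * (θ • Q))) = θ := by
    rw [Matrix.transpose_smul, Matrix.smul_mul, Matrix.mul_smul,
      Matrix.trace_smul, Matrix.trace_smul, hQ]
    simp only [smul_eq_mul]
    rw [show (1 / 2 : ℝ) * (θ * (θ * 2)) = θ ^ 2 by ring, Real.sqrt_sq hθ.le]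
  simp only [bchSO3]
  rw [hsqP, hsqQ]
  have hcomm : (θ • P) * (θ • Q) - (θ • Q) * (θ • P)
      = (θ * θ) • (P * Q - Q * P) := by
    simp [Matrix.smul_mul, Matrix.mul_smul, smul_smul, smul_sub]
  have k : ∀ (t : ℝ), t ≠ 0 → ∀ (x y : ℝ) (M : Matrix (Fin 3) (Fin 3) ℝ),
      (x * (y / t)) • (t • M) = (x * y) • M := by
    intro t ht x y M
    rw [smul_smul]
    congr 1
    field_simp
  rw [hcomm, k θ hθ.ne', k θ hθ.ne', k (θ * θ) (by positivity)]

set_option maxHeartbeats 4000000 in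
/-- For `θ ∈ (0, 2π)` with `θ ∉ {π/2, π, 3π/2}`, the three BCH elements
`log(e^{X₁₂}e^{X₁₃})`, `log(e^{X₁₂}e^{X₂₃})`, `log(e^{X₁₃}e^{X₂₃})` (given by
the BCH formula for `𝔰𝔬(3)`) are linearly independent, i.e. form a basis of
`𝔰𝔬(3)`. -/
theorem bch_elements_basis (θ : ℝ) (h0 : 0 < θ) (h2 : θ < 2 * Real.pi)
    (hhalf : θ ≠ Real.pi / 2) (hpi : θ ≠ Real.pi)
    (h3 : θ ≠ 3 * Real.pi / 2) :
    let E₁₂ : Matrix (Fin 3) (Fin 3) ℝ := !![0, 1, 0; -1, 0, 0; 0, 0, 0]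
    let E₁₃ : Matrix (Fin 3) (Fin 3) ℝ := !![0, 0, 1; 0, 0, 0; -1, 0, 0]
    let E₂₃ : Matrix (Fin 3) (Fin 3) ℝ := !![0, 0, 0; 0, 0, 1; 0, -1, 0]
    let X₁₂ := θ • E₁₂
    let X₁₃ := θ • E₁₃
    let X₂₃ := θ • E₂₃
    LinearIndependent ℝ ![bchSO3 X₁₂ X₁₃, bchSO3 X₁₂ X₂₃, bchSO3 X₁₃ X₂₃] ∧
      ∀ A : Matrix (Fin 3) (Fin 3) ℝ, Aᵀ = -A →
        A ∈ Submodule.span ℝ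
          ({bchSO3 X₁₂ X₁₃, bchSO3 X₁₂ X₂₃, bchSO3 X₁₃ X₂₃} :
            Set (Matrix (Fin 3) (Fin 3) ℝ)) := by
  intro E₁₂ E₁₃ E₂₃ X₁₂ X₁₃ X₂₃
  have pi_pos := Real.pi_pos
  have hE12 : E₁₂ = !![0, 1, 0; -1, 0, 0; 0, 0, 0] := rfl
  have hE13 : E₁₃ = !![0, 0, 1; 0, 0, 0; -1, 0, 0] := rfl
  have hE23 : E₂₃ = !![0, 0, 0; 0, 0, 1; 0, -1, 0] := rfl
  have hX12 : X₁₂ = θ • E₁₂ := rfl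
  have hX13 : X₁₃ = θ • E₁₃ := rfl
  have hX23 : X₂₃ = θ • E₂₃ := rfl
  -- scalar setup
  have hs : 0 < Real.sin (θ / 2) :=
    Real.sin_pos_of_pos_of_lt_pi (by linarith) (by linarith)
  have hco : Real.cos (θ / 2) ≠ 0 := by
    rcases lt_trichotomy (θ / 2) (Real.pi / 2) with h | h | h
    · exact ne_of_gt (Real.cos_pos_of_mem_Ioo ⟨by linarith, h⟩)
    · exact absurd (by linarith : θ = Real.pi) hpi
    · exact ne_of_lt (Real.cos_neg_of_pi_div_two_lt_of_lt h (by linarith))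
  have hsin2 : Real.sin θ = 2 * Real.sin (θ / 2) * Real.cos (θ / 2) := by
    rw [show θ = 2 * (θ / 2) by ring, Real.sin_two_mul]
    ring_nf
  set a := Real.sin θ * Real.cos (θ / 2) ^ 2 with ha_def
  set c := 1 / 2 * Real.sin θ * Real.sin θ with hc_def
  set d := Real.sqrt (a ^ 2 + a ^ 2 + c ^ 2) with hd_def
  set K := Real.arcsin d / d with hK_def
  have ha_ne : a ≠ 0 := by
    rw [ha_def, hsin2]
    exact mul_ne_zero (mul_ne_zero (mul_ne_zero two_ne_zero hs.ne') hco)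
      (pow_ne_zero _ hco)
  have ha2 : 0 < a ^ 2 := by positivity
  have hd_pos : 0 < d := Real.sqrt_pos.mpr (by nlinarith [sq_nonneg c])
  have hK_pos : 0 < K := div_pos (Real.arcsin_pos.mpr hd_pos) hd_pos
  set A := K * a with hA_def
  set C := K * c with hC_def
  have hΔ : 2 * A ^ 3 + A ^ 2 * C + C ^ 3 ≠ 0 := by
    have h1 : 2 * A ^ 3 + A ^ 2 * C + C ^ 3
        = K ^ 3 * (2 * a ^ 3 + a ^ 2 * c + c ^ 3) := by
      rw [hA_def, hC_def]; ring
    have hfact : 2 * a ^ 3 + a ^ 2 * c + c ^ 3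
        = 8 * Real.sin (θ / 2) ^ 3 * Real.cos (θ / 2) ^ 6 *
          (2 * Real.cos (θ / 2) ^ 3 + Real.sin (θ / 2)) := by
      rw [ha_def, hc_def, hsin2]
      linear_combination (8 * Real.sin (θ / 2) ^ 4 * Real.cos (θ / 2) ^ 6) *
        Real.sin_sq_add_cos_sq (θ / 2)
    rw [h1, hfact]
    exact mul_ne_zero (pow_ne_zero _ hK_pos.ne')
      (mul_ne_zero (mul_ne_zero (by positivity) (pow_ne_zero _ hco))
        (key_ne θ h0 h2 h3))
  -- trace facts
  have htp12 : (!![0, 1, 0; -1, 0, 0; 0, 0, 0] : Matrix (Fin 3) (Fin 3) ℝ)ᵀ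
      = !![0, -1, 0; 1, 0, 0; 0, 0, 0] := by
    ext i j
    fin_cases i <;> fin_cases j <;>
      simp [Matrix.transpose_apply, Matrix.vecHead, Matrix.vecTail]
  have htp13 : (!![0, 0, 1; 0, 0, 0; -1, 0, 0] : Matrix (Fin 3) (Fin 3) ℝ)ᵀ
      = !![0, 0, -1; 0, 0, 0; 1, 0, 0] := by
    ext i j
    fin_cases i <;> fin_cases j <;>
      simp [Matrix.transpose_apply, Matrix.vecHead, Matrix.vecTail]
  have htp23 : (!![0, 0, 0; 0, 0, 1; 0, -1, 0] : Matrix (Fin 3) (Fin 3) ℝ)ᵀ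
      = !![0, 0, 0; 0, 0, -1; 0, 1, 0] := by
    ext i j
    fin_cases i <;> fin_cases j <;>
      simp [Matrix.transpose_apply, Matrix.vecHead, Matrix.vecTail]
  have htr12 : Matrix.trace (E₁₂ᵀ * E₁₂) = 2 := by
    rw [hE12, htp12]
    simp [Matrix.trace_fin_three, Matrix.mul_apply, Fin.sum_univ_three,
      Matrix.vecHead, Matrix.vecTail] <;> norm_num
  have htr13 : Matrix.trace (E₁₃ᵀ * E₁₃) = 2 := by
    rw [hE13, htp13]
    simp [Matrix.trace_fin_three, Matrix.mul_apply, Fin.sum_univ_three,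
      Matrix.vecHead, Matrix.vecTail] <;> norm_num
  have htr23 : Matrix.trace (E₂₃ᵀ * E₂₃) = 2 := by
    rw [hE23, htp23]
    simp [Matrix.trace_fin_three, Matrix.mul_apply, Fin.sum_univ_three,
      Matrix.vecHead, Matrix.vecTail] <;> norm_num
  -- the three BCH elements as explicit matrices
  have hB1 : bchSO3 X₁₂ X₁₃ = !![0, A, A; -A, 0, -C; -A, C, 0] := by
    rw [hX12, hX13,
      bch_smul θ a c d K h0 ha_def hc_def hd_def hK_def E₁₂ E₁₃ htr12 htr13,
      hE12, hE13]
    ext i j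
    fin_cases i <;> fin_cases j <;>
      simp [Matrix.mul_apply, Fin.sum_univ_three, Matrix.add_apply, Matrix.smul_apply, Matrix.sub_apply, Matrix.vecHead, Matrix.vecTail, hA_def, hC_def] <;> ring_nf
  have hB2 : bchSO3 X₁₂ X₂₃ = !![0, A, C; -A, 0, A; -C, -A, 0] := by
    rw [hX12, hX23,
      bch_smul θ a c d K h0 ha_def hc_def hd_def hK_def E₁₂ E₂₃ htr12 htr23,
      hE12, hE23]
    ext i j
    fin_cases i <;> fin_cases j <;>
      simp [Matrix.mul_apply, Fin.sum_univ_three, Matrix.add_apply, Matrix.smul_apply, Matrix.sub_apply, Matrix.vecHead, Matrix.vecTail, hA_def, hC_def] <;> ring_nf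
  have hB3 : bchSO3 X₁₃ X₂₃ = !![0, -C, A; C, 0, A; -A, -A, 0] := by
    rw [hX13, hX23,
      bch_smul θ a c d K h0 ha_def hc_def hd_def hK_def E₁₃ E₂₃ htr13 htr23,
      hE13, hE23]
    ext i j
    fin_cases i <;> fin_cases j <;>
      simp [Matrix.mul_apply, Fin.sum_univ_three, Matrix.add_apply, Matrix.smul_apply, Matrix.sub_apply, Matrix.vecHead, Matrix.vecTail, hA_def, hC_def] <;> ring_nf
  constructor
  · refine Fintype.linearIndependent_iff.mpr fun g hg => ?_
    rw [Fin.sum_univ_three] at hg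
    simp only [Matrix.cons_val_zero, Matrix.cons_val_one, Matrix.head_cons,
      Matrix.cons_val_two, Matrix.tail_cons] at hg
    rw [hB1, hB2, hB3] at hg
    have e1 := congrFun (congrFun hg 0) 1
    have e2 := congrFun (congrFun hg 0) 2
    have e3 := congrFun (congrFun hg 1) 2
    simp [Matrix.add_apply, Matrix.smul_apply] at e1 e2 e3
    have hg0 : g 0 = 0 := by
      have h := mul_eq_zero.mp (show (2 * A ^ 3 + A ^ 2 * C + C ^ 3) * g 0 = 0 by
        linear_combination (A ^ 2 - A * C) * e1 + (A ^ 2 + A * C) * e2 -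
          (A ^ 2 + C ^ 2) * e3)
      exact h.resolve_left hΔ
    have hg1 : g 1 = 0 := by
      have h := mul_eq_zero.mp (show (2 * A ^ 3 + A ^ 2 * C + C ^ 3) * g 1 = 0 by
        linear_combination (A ^ 2 + A * C) * e1 - (A ^ 2 - C ^ 2) * e2 +
          (A ^ 2 + A * C) * e3)
      exact h.resolve_left hΔ
    have hg2 : g 2 = 0 := by
      have h := mul_eq_zero.mp (show (2 * A ^ 3 + A ^ 2 * C + C ^ 3) * g 2 = 0 by
        linear_combination (-(A ^ 2 + C ^ 2)) * e1 + (A ^ 2 + A * C) * e2 +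
          (A ^ 2 - A * C) * e3)
      exact h.resolve_left hΔ
    intro i
    fin_cases i <;> assumption
  · intro M hskew
    set S : Set (Matrix (Fin 3) (Fin 3) ℝ) :=
      {bchSO3 X₁₂ X₁₃, bchSO3 X₁₂ X₂₃, bchSO3 X₁₃ X₂₃} with hS
    have hm1 : bchSO3 X₁₂ X₁₃ ∈ Submodule.span ℝ S :=
      Submodule.subset_span (by simp [hS])
    have hm2 : bchSO3 X₁₂ X₂₃ ∈ Submodule.span ℝ S :=
      Submodule.subset_span (by simp [hS])
    have hm3 : bchSO3 X₁₃ X₂₃ ∈ Submodule.span ℝ S :=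
      Submodule.subset_span (by simp [hS])
    set Δ := 2 * A ^ 3 + A ^ 2 * C + C ^ 3 with hΔ_def
    have hE12mem : E₁₂ ∈ Submodule.span ℝ S := by
      have heq : E₁₂ = ((A ^ 2 - A * C) / Δ) • bchSO3 X₁₂ X₁₃ +
          ((A ^ 2 + A * C) / Δ) • bchSO3 X₁₂ X₂₃ +
          (-(A ^ 2 + C ^ 2) / Δ) • bchSO3 X₁₃ X₂₃ := by
        rw [hB1, hB2, hB3, hE12]
        ext i j
        fin_cases i <;> fin_cases j <;>
          simp [Matrix.add_apply, Matrix.smul_apply, Matrix.vecHead, Matrix.vecTail] <;> (field_simp; ring1)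
      rw [heq]
      exact Submodule.add_mem _ (Submodule.add_mem _
        (Submodule.smul_mem _ _ hm1) (Submodule.smul_mem _ _ hm2))
        (Submodule.smul_mem _ _ hm3)
    have hE13mem : E₁₃ ∈ Submodule.span ℝ S := by
      have heq : E₁₃ = ((A ^ 2 + A * C) / Δ) • bchSO3 X₁₂ X₁₃ +
          (-(A ^ 2 - C ^ 2) / Δ) • bchSO3 X₁₂ X₂₃ +
          ((A ^ 2 + A * C) / Δ) • bchSO3 X₁₃ X₂₃ := by
        rw [hB1, hB2, hB3, hE13]
        ext i j
        fin_cases i <;> fin_cases j <;>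
          simp [Matrix.add_apply, Matrix.smul_apply, Matrix.vecHead, Matrix.vecTail] <;> (field_simp; ring1)
      rw [heq]
      exact Submodule.add_mem _ (Submodule.add_mem _
        (Submodule.smul_mem _ _ hm1) (Submodule.smul_mem _ _ hm2))
        (Submodule.smul_mem _ _ hm3)
    have hE23mem : E₂₃ ∈ Submodule.span ℝ S := by
      have heq : E₂₃ = (-(A ^ 2 + C ^ 2) / Δ) • bchSO3 X₁₂ X₁₃ +
          ((A ^ 2 + A * C) / Δ) • bchSO3 X₁₂ X₂₃ +
          ((A ^ 2 - A * C) / Δ) • bchSO3 X₁₃ X₂₃ := by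
        rw [hB1, hB2, hB3, hE23]
        ext i j
        fin_cases i <;> fin_cases j <;>
          simp [Matrix.add_apply, Matrix.smul_apply, Matrix.vecHead, Matrix.vecTail] <;> (field_simp; ring1)
      rw [heq]
      exact Submodule.add_mem _ (Submodule.add_mem _
        (Submodule.smul_mem _ _ hm1) (Submodule.smul_mem _ _ hm2))
        (Submodule.smul_mem _ _ hm3)
    have hsk : ∀ i j, M j i = -M i j := by
      intro i j
      have := congrFun (congrFun hskew i) j
      simpa [Matrix.transpose_apply, Matrix.neg_apply] using this
    have hMrep : M = M 0 1 • E₁₂ + M 0 2 • E₁₃ + M 1 2 • E₂₃ := by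
      rw [hE12, hE13, hE23]
      ext i j
      fin_cases i <;> fin_cases j <;>
        simp [Matrix.add_apply, Matrix.smul_apply, Matrix.vecHead, Matrix.vecTail] <;>
        linarith [hsk 0 0, hsk 1 1, hsk 2 2, hsk 0 1, hsk 0 2, hsk 1 2]
    rw [hMrep]
    exact Submodule.add_mem _ (Submodule.add_mem _
      (Submodule.smul_mem _ _ hE12mem) (Submodule.smul_mem _ _ hE13mem))
      (Submodule.smul_mem _ _ hE23mem)
end

section
/- In 𝔰𝔬(4), define A₁₂₃ = E₁₂ − E₁₃ + E₂₃, A₂₃₄ = E₂₃ − E₂₄ + E₃₄, A₁₃₄ = E₁₃ − E₁₄ + E₃₄, A₁₂₄ = E₁₂ − E₁₄ + E₂₄. Then A₁₂₃ + A₁₃₄ = A₁₂₄ + A₂₃₄, the real span of these four elements is 3-dimensional, and this span is closed under the Lie bracket (commutator), hence is a 3-dimensional Lie subalgebra of 𝔰𝔬(4). -/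
set_option maxHeartbeats 1000000
open Matrix

/-- The standard basis element `E_{ij} = e_ie_jᵀ − e_je_iᵀ` of `𝔰𝔬(4)`. -/
def Eso4 (i j : Fin 4) : Matrix (Fin 4) (Fin 4) ℝ :=
  Matrix.single i j 1 - Matrix.single j i 1

noncomputable section AuxC

def C1 : Matrix (Fin 4) (Fin 4) ℝ := !![0,1,-1,0; -1,0,1,0; 1,-1,0,0; 0,0,0,0]
def C2 : Matrix (Fin 4) (Fin 4) ℝ := !![0,0,0,0; 0,0,1,-1; 0,-1,0,1; 0,1,-1,0]
def C3 : Matrix (Fin 4) (Fin 4) ℝ := !![0,0,1,-1; 0,0,0,0; -1,0,0,1; 1,0,-1,0]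
def C4 : Matrix (Fin 4) (Fin 4) ℝ := !![0,1,0,-1; -1,0,0,1; 0,0,0,0; 1,-1,0,0]

end AuxC

lemma eC1 : Eso4 0 1 - Eso4 0 2 + Eso4 1 2 = C1 := by
  ext i j
  fin_cases i <;> fin_cases j <;>
    simp [Eso4, C1, Matrix.single, vecHead, vecTail]

lemma eC2 : Eso4 1 2 - Eso4 1 3 + Eso4 2 3 = C2 := by
  ext i j
  fin_cases i <;> fin_cases j <;>
    simp [Eso4, C2, Matrix.single, vecHead, vecTail]

lemma eC3 : Eso4 0 2 - Eso4 0 3 + Eso4 2 3 = C3 := by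
  ext i j
  fin_cases i <;> fin_cases j <;>
    simp [Eso4, C3, Matrix.single, vecHead, vecTail]

lemma eC4 : Eso4 0 1 - Eso4 0 3 + Eso4 1 3 = C4 := by
  ext i j
  fin_cases i <;> fin_cases j <;>
    simp [Eso4, C4, Matrix.single, vecHead, vecTail]

lemma hC4 : C4 = C1 - C2 + C3 := by
  simp only [C1, C2, C3, C4]
  ext i j
  fin_cases i <;> fin_cases j <;>
    simp [vecHead, vecTail] <;> norm_num

lemma br12 : C1 * C2 - C2 * C1 = C1 - C2 + (2:ℝ) • C3 := by
  simp only [C1, C2, C3]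
  ext i j
  fin_cases i <;> fin_cases j <;>
    simp [Matrix.mul_apply, Fin.sum_univ_four, vecHead, vecTail] <;> norm_num

lemma br13 : C1 * C3 - C3 * C1 = C1 - (2:ℝ) • C2 + C3 := by
  simp only [C1, C2, C3]
  ext i j
  fin_cases i <;> fin_cases j <;>
    simp [Matrix.mul_apply, Fin.sum_univ_four, vecHead, vecTail] <;> norm_num

lemma br14 : C1 * C4 - C4 * C1 = -C2 - C3 := by
  simp only [C1, C2, C3, C4]
  ext i j
  fin_cases i <;> fin_cases j <;>
    simp [Matrix.mul_apply, Fin.sum_univ_four, vecHead, vecTail] <;> norm_num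

lemma br23 : C2 * C3 - C3 * C2 = (2:ℝ) • C1 - C2 + C3 := by
  simp only [C1, C2, C3]
  ext i j
  fin_cases i <;> fin_cases j <;>
    simp [Matrix.mul_apply, Fin.sum_univ_four, vecHead, vecTail] <;> norm_num

lemma br24 : C2 * C4 - C4 * C2 = C1 - C3 := by
  simp only [C1, C2, C3, C4]
  ext i j
  fin_cases i <;> fin_cases j <;>
    simp [Matrix.mul_apply, Fin.sum_univ_four, vecHead, vecTail] <;> norm_num

lemma br34 : C3 * C4 - C4 * C3 = C1 + C2 := by
  simp only [C1, C2, C3, C4]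
  ext i j
  fin_cases i <;> fin_cases j <;>
    simp [Matrix.mul_apply, Fin.sum_univ_four, vecHead, vecTail] <;> norm_num

lemma linC : LinearIndependent ℝ ![C1, C2, C3] := by
  rw [Fintype.linearIndependent_iff]
  intro g hg
  rw [Fin.sum_univ_three] at hg
  simp only [Matrix.cons_val_zero, Matrix.cons_val_one, Matrix.head_cons,
    Matrix.cons_val_two, Matrix.tail_cons] at hg
  have h1 := congrFun (congrFun hg 0) 1
  have h2 := congrFun (congrFun hg 1) 3
  have h3 := congrFun (congrFun hg 0) 3
  simp [C1, C2, C3, vecHead, vecTail] at h1 h2 h3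
  intro i
  fin_cases i <;> simp_all

/-- With `A₁₂₃ = E₁₂ − E₁₃ + E₂₃`, `A₂₃₄ = E₂₃ − E₂₄ + E₃₄`,
`A₁₃₄ = E₁₃ − E₁₄ + E₃₄`, `A₁₂₄ = E₁₂ − E₁₄ + E₂₄` in `𝔰𝔬(4)`, one has
`A₁₂₃ + A₁₃₄ = A₁₂₄ + A₂₃₄`, the span of the four elements is 3-dimensional,
and it is closed under the commutator bracket. -/
theorem span_A_subalgebra :
    let A₁₂₃ := Eso4 0 1 - Eso4 0 2 + Eso4 1 2
    let A₂₃₄ := Eso4 1 2 - Eso4 1 3 + Eso4 2 3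
    let A₁₃₄ := Eso4 0 2 - Eso4 0 3 + Eso4 2 3
    let A₁₂₄ := Eso4 0 1 - Eso4 0 3 + Eso4 1 3
    A₁₂₃ + A₁₃₄ = A₁₂₄ + A₂₃₄ ∧
      Module.finrank ℝ
          (Submodule.span ℝ ({A₁₂₃, A₂₃₄, A₁₃₄, A₁₂₄} :
            Set (Matrix (Fin 4) (Fin 4) ℝ))) = 3 ∧
      ∀ X ∈ Submodule.span ℝ ({A₁₂₃, A₂₃₄, A₁₃₄, A₁₂₄} :
          Set (Matrix (Fin 4) (Fin 4) ℝ)),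
        ∀ Y ∈ Submodule.span ℝ ({A₁₂₃, A₂₃₄, A₁₃₄, A₁₂₄} :
            Set (Matrix (Fin 4) (Fin 4) ℝ)),
          X * Y - Y * X ∈ Submodule.span ℝ ({A₁₂₃, A₂₃₄, A₁₃₄, A₁₂₄} :
            Set (Matrix (Fin 4) (Fin 4) ℝ)) := by
  intro A₁₂₃ A₂₃₄ A₁₃₄ A₁₂₄
  have e1 : A₁₂₃ = C1 := eC1
  have e2 : A₂₃₄ = C2 := eC2
  have e3 : A₁₃₄ = C3 := eC3
  have e4 : A₁₂₄ = C4 := eC4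
  rw [e1, e2, e3, e4]
  have m1 : C1 ∈ Submodule.span ℝ ({C1, C2, C3, C4} : Set (Matrix (Fin 4) (Fin 4) ℝ)) :=
    Submodule.subset_span (by simp)
  have m2 : C2 ∈ Submodule.span ℝ ({C1, C2, C3, C4} : Set (Matrix (Fin 4) (Fin 4) ℝ)) :=
    Submodule.subset_span (by simp)
  have m3 : C3 ∈ Submodule.span ℝ ({C1, C2, C3, C4} : Set (Matrix (Fin 4) (Fin 4) ℝ)) :=
    Submodule.subset_span (by simp)
  have w12 := add_mem (sub_mem m1 m2) (Submodule.smul_mem _ (2:ℝ) m3)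
  have w13 := add_mem (sub_mem m1 (Submodule.smul_mem _ (2:ℝ) m2)) m3
  have w14 := sub_mem (neg_mem m2) m3
  have w23 := add_mem (sub_mem (Submodule.smul_mem _ (2:ℝ) m1) m2) m3
  have w24 := sub_mem m1 m3
  have w34 := add_mem m1 m2
  refine ⟨?_, ?_, ?_⟩
  · rw [hC4]
    abel
  · have hset : Submodule.span ℝ ({C1, C2, C3, C4} : Set (Matrix (Fin 4) (Fin 4) ℝ)) =
        Submodule.span ℝ ({C1, C2, C3} : Set (Matrix (Fin 4) (Fin 4) ℝ)) := by
      apply le_antisymm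
      · rw [Submodule.span_le]
        rintro x (rfl | rfl | rfl | rfl)
        · exact Submodule.subset_span (by simp)
        · exact Submodule.subset_span (by simp)
        · exact Submodule.subset_span (by simp)
        · rw [hC4]
          exact add_mem (sub_mem (Submodule.subset_span (by simp))
            (Submodule.subset_span (by simp))) (Submodule.subset_span (by simp))
      · exact Submodule.span_mono (by intro x hx; rcases hx with rfl | rfl | rfl <;> simp)
    have hr : ({C1, C2, C3} : Set (Matrix (Fin 4) (Fin 4) ℝ)) = Set.range ![C1, C2, C3] := by
      ext x
      simp only [Set.mem_insert_iff, Set.mem_singleton_iff, Set.mem_range]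
      constructor
      · rintro (rfl | rfl | rfl)
        exacts [⟨0, rfl⟩, ⟨1, rfl⟩, ⟨2, rfl⟩]
      · rintro ⟨i, rfl⟩
        fin_cases i <;> simp
    rw [hset, hr, finrank_span_eq_card linC]
    simp
  · have key : ∀ X ∈ ({C1, C2, C3, C4} : Set (Matrix (Fin 4) (Fin 4) ℝ)),
        ∀ Y ∈ ({C1, C2, C3, C4} : Set (Matrix (Fin 4) (Fin 4) ℝ)),
        X * Y - Y * X ∈ Submodule.span ℝ ({C1, C2, C3, C4} : Set (Matrix (Fin 4) (Fin 4) ℝ)) := by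
      rintro X (rfl | rfl | rfl | rfl) Y (rfl | rfl | rfl | rfl)
      · rw [sub_self]; exact Submodule.zero_mem _
      · rw [br12]; exact w12
      · rw [br13]; exact w13
      · rw [br14]; exact w14
      · rw [show C2 * C1 - C1 * C2 = -(C1 * C2 - C2 * C1) by abel, br12]
        exact neg_mem w12
      · rw [sub_self]; exact Submodule.zero_mem _
      · rw [br23]; exact w23
      · rw [br24]; exact w24
      · rw [show C3 * C1 - C1 * C3 = -(C1 * C3 - C3 * C1) by abel, br13]
        exact neg_mem w13
      · rw [show C3 * C2 - C2 * C3 = -(C2 * C3 - C3 * C2) by abel, br23]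
        exact neg_mem w23
      · rw [sub_self]; exact Submodule.zero_mem _
      · rw [br34]; exact w34
      · rw [show C4 * C1 - C1 * C4 = -(C1 * C4 - C4 * C1) by abel, br14]
        exact neg_mem w14
      · rw [show C4 * C2 - C2 * C4 = -(C2 * C4 - C4 * C2) by abel, br24]
        exact neg_mem w24
      · rw [show C4 * C3 - C3 * C4 = -(C3 * C4 - C4 * C3) by abel, br34]
        exact neg_mem w34
      · rw [sub_self]; exact Submodule.zero_mem _
    intro X hX Y hY
    set f : Matrix (Fin 4) (Fin 4) ℝ →ₗ[ℝ] Matrix (Fin 4) (Fin 4) ℝ →ₗ[ℝ] Matrix (Fin 4) (Fin 4) ℝ :=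
      LinearMap.mul ℝ (Matrix (Fin 4) (Fin 4) ℝ) - (LinearMap.mul ℝ (Matrix (Fin 4) (Fin 4) ℝ)).flip
      with hf
    have hmap : Submodule.map₂ f
        (Submodule.span ℝ ({C1, C2, C3, C4} : Set (Matrix (Fin 4) (Fin 4) ℝ)))
        (Submodule.span ℝ ({C1, C2, C3, C4} : Set (Matrix (Fin 4) (Fin 4) ℝ))) ≤
        Submodule.span ℝ ({C1, C2, C3, C4} : Set (Matrix (Fin 4) (Fin 4) ℝ)) := by
      rw [Submodule.map₂_span_span, Submodule.span_le]
      rintro z ⟨x, hx, y, hy, rfl⟩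
      exact key x hx y hy
    exact hmap (Submodule.apply_mem_map₂ f hX hY)
end

section
/- With A₁₂₃, A₂₃₄, A₁₃₄, A₁₂₄ ∈ 𝔰𝔬(4) as above, set X = (1/4)(A₁₂₃+A₂₃₄+A₁₃₄+A₁₂₄), Y = (1/4)(A₁₂₃+A₂₃₄−A₁₃₄−A₁₂₄), Z = −(1/4)(A₁₂₃−A₂₃₄−A₁₃₄+A₁₂₄). Then [X,Y] = Z, [Z,X] = Y, [Y,Z] = X, so Span_ℝ{A₁₂₃,A₂₃₄,A₁₃₄,A₁₂₄} is a Lie algebra isomorphic to 𝔰𝔬(3). -/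
open Matrix

attribute [local instance 100] LieRing.ofAssociativeRing

noncomputable def Xm : Matrix (Fin 4) (Fin 4) ℝ :=
  !![0, 1/2, 0, -1/2; -1/2, 0, 1/2, 0; 0, -1/2, 0, 1/2; 1/2, 0, -1/2, 0]

noncomputable def Ym : Matrix (Fin 4) (Fin 4) ℝ :=
  !![0, 0, -1/2, 1/2; 0, 0, 1/2, -1/2; 1/2, -1/2, 0, 0; -1/2, 1/2, 0, 0]

noncomputable def Zm : Matrix (Fin 4) (Fin 4) ℝ :=
  !![0, -1/2, 1/2, 0; 1/2, 0, 0, -1/2; -1/2, 0, 0, 1/2; 0, 1/2, -1/2, 0]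

lemma pXY : Xm * Ym = !![1/4,-1/4,1/4,-1/4; 1/4,-1/4,1/4,-1/4; -1/4,1/4,-1/4,1/4; -1/4,1/4,-1/4,1/4] := by
  ext i j
  fin_cases i <;> fin_cases j <;>
    simp [Xm, Ym, Matrix.mul_apply, Fin.sum_univ_four, Matrix.vecHead, Matrix.vecTail] <;> norm_num

lemma pYX : Ym * Xm = !![1/4,1/4,-1/4,-1/4; -1/4,-1/4,1/4,1/4; 1/4,1/4,-1/4,-1/4; -1/4,-1/4,1/4,1/4] := by
  ext i j
  fin_cases i <;> fin_cases j <;>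
    simp [Xm, Ym, Matrix.mul_apply, Fin.sum_univ_four, Matrix.vecHead, Matrix.vecTail] <;> norm_num

lemma pZX : Zm * Xm = !![1/4,-1/4,-1/4,1/4; -1/4,1/4,1/4,-1/4; 1/4,-1/4,-1/4,1/4; -1/4,1/4,1/4,-1/4] := by
  ext i j
  fin_cases i <;> fin_cases j <;>
    simp [Xm, Zm, Matrix.mul_apply, Fin.sum_univ_four, Matrix.vecHead, Matrix.vecTail] <;> norm_num

lemma pXZ : Xm * Zm = !![1/4,-1/4,1/4,-1/4; -1/4,1/4,-1/4,1/4; -1/4,1/4,-1/4,1/4; 1/4,-1/4,1/4,-1/4] := by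
  ext i j
  fin_cases i <;> fin_cases j <;>
    simp [Xm, Zm, Matrix.mul_apply, Fin.sum_univ_four, Matrix.vecHead, Matrix.vecTail] <;> norm_num

lemma pYZ : Ym * Zm = !![1/4,1/4,-1/4,-1/4; -1/4,-1/4,1/4,1/4; -1/4,-1/4,1/4,1/4; 1/4,1/4,-1/4,-1/4] := by
  ext i j
  fin_cases i <;> fin_cases j <;>
    simp [Ym, Zm, Matrix.mul_apply, Fin.sum_univ_four, Matrix.vecHead, Matrix.vecTail] <;> norm_num

lemma pZY : Zm * Ym = !![1/4,-1/4,-1/4,1/4; 1/4,-1/4,-1/4,1/4; -1/4,1/4,1/4,-1/4; -1/4,1/4,1/4,-1/4] := by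
  ext i j
  fin_cases i <;> fin_cases j <;>
    simp [Ym, Zm, Matrix.mul_apply, Fin.sum_univ_four, Matrix.vecHead, Matrix.vecTail] <;> norm_num

lemma lXY : Xm * Ym - Ym * Xm = Zm := by
  rw [pXY, pYX]
  ext i j
  fin_cases i <;> fin_cases j <;>
    simp [Zm, Matrix.sub_apply, Matrix.vecHead, Matrix.vecTail] <;> norm_num

lemma lZX : Zm * Xm - Xm * Zm = Ym := by
  rw [pZX, pXZ]
  ext i j
  fin_cases i <;> fin_cases j <;>
    simp [Ym, Matrix.sub_apply, Matrix.vecHead, Matrix.vecTail] <;> norm_num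

lemma lYZ : Ym * Zm - Zm * Ym = Xm := by
  rw [pYZ, pZY]
  ext i j
  fin_cases i <;> fin_cases j <;>
    simp [Xm, Matrix.sub_apply, Matrix.vecHead, Matrix.vecTail] <;> norm_num

lemma bXY : ⁅Xm, Ym⁆ = Zm := by rw [Ring.lie_def]; exact lXY
lemma bZX : ⁅Zm, Xm⁆ = Ym := by rw [Ring.lie_def]; exact lZX
lemma bYZ : ⁅Ym, Zm⁆ = Xm := by rw [Ring.lie_def]; exact lYZ
lemma bYX : ⁅Ym, Xm⁆ = -Zm := by rw [← lie_skew, bXY]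
lemma bXZ : ⁅Xm, Zm⁆ = -Ym := by rw [← lie_skew, bZX]
lemma bZY : ⁅Zm, Ym⁆ = -Xm := by rw [← lie_skew, bYZ]

lemma eqA123 : Eso4 0 1 - Eso4 0 2 + Eso4 1 2 = Xm + Ym - Zm := by
  ext i j
  fin_cases i <;> fin_cases j <;>
    simp [Eso4, Xm, Ym, Zm, Matrix.single, Matrix.vecHead, Matrix.vecTail] <;>
      norm_num

lemma eqA234 : Eso4 1 2 - Eso4 1 3 + Eso4 2 3 = Xm + Ym + Zm := by
  ext i j
  fin_cases i <;> fin_cases j <;>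
    simp [Eso4, Xm, Ym, Zm, Matrix.single, Matrix.vecHead, Matrix.vecTail] <;>
      norm_num

lemma eqA134 : Eso4 0 2 - Eso4 0 3 + Eso4 2 3 = Xm - Ym + Zm := by
  ext i j
  fin_cases i <;> fin_cases j <;>
    simp [Eso4, Xm, Ym, Zm, Matrix.single, Matrix.vecHead, Matrix.vecTail] <;>
      norm_num

lemma eqA124 : Eso4 0 1 - Eso4 0 3 + Eso4 1 3 = Xm - Ym - Zm := by
  ext i j
  fin_cases i <;> fin_cases j <;>
    simp [Eso4, Xm, Ym, Zm, Matrix.single, Matrix.vecHead, Matrix.vecTail] <;>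
      norm_num

/-- skew-adjointness w.r.t. `1` is just skew-symmetry. -/
lemma mem_skew_iff (a : Matrix (Fin 3) (Fin 3) ℝ) :
    a ∈ skewAdjointMatricesLieSubalgebra (1 : Matrix (Fin 3) (Fin 3) ℝ) ↔ aᵀ = -a := by
  rw [mem_skewAdjointMatricesLieSubalgebra, mem_skewAdjointMatricesSubmodule]
  simp [Matrix.IsSkewAdjoint, Matrix.IsAdjointPair]

noncomputable def φ :
    skewAdjointMatricesLieSubalgebra (1 : Matrix (Fin 3) (Fin 3) ℝ) →ₗ⁅ℝ⁆
      Matrix (Fin 4) (Fin 4) ℝ where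
  toFun a := (a : Matrix (Fin 3) (Fin 3) ℝ) 2 1 • Xm +
    (a : Matrix (Fin 3) (Fin 3) ℝ) 0 2 • Ym + (a : Matrix (Fin 3) (Fin 3) ℝ) 1 0 • Zm
  map_add' a b := by
    have h : ∀ i j, ((a + b :
        skewAdjointMatricesLieSubalgebra (1 : Matrix (Fin 3) (Fin 3) ℝ)) :
        Matrix (Fin 3) (Fin 3) ℝ) i j =
        (a : Matrix (Fin 3) (Fin 3) ℝ) i j + (b : Matrix (Fin 3) (Fin 3) ℝ) i j :=
      fun i j => rfl
    simp only [h, add_smul]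
    abel
  map_smul' c a := by
    have h : ∀ i j, ((c • a :
        skewAdjointMatricesLieSubalgebra (1 : Matrix (Fin 3) (Fin 3) ℝ)) :
        Matrix (Fin 3) (Fin 3) ℝ) i j = c * (a : Matrix (Fin 3) (Fin 3) ℝ) i j :=
      fun i j => rfl
    simp only [h, RingHom.id_apply, smul_add, mul_smul]
  map_lie' := by
    intro a b
    have ha : (a : Matrix (Fin 3) (Fin 3) ℝ)ᵀ = -(a : Matrix (Fin 3) (Fin 3) ℝ) :=
      (mem_skew_iff _).mp a.2
    have hb : (b : Matrix (Fin 3) (Fin 3) ℝ)ᵀ = -(b : Matrix (Fin 3) (Fin 3) ℝ) :=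
      (mem_skew_iff _).mp b.2
    have ha' : ∀ i j, (a : Matrix (Fin 3) (Fin 3) ℝ) j i =
        -((a : Matrix (Fin 3) (Fin 3) ℝ) i j) := fun i j => by
      have := congrFun (congrFun ha i) j
      simpa [Matrix.transpose_apply] using this
    have hb' : ∀ i j, (b : Matrix (Fin 3) (Fin 3) ℝ) j i =
        -((b : Matrix (Fin 3) (Fin 3) ℝ) i j) := fun i j => by
      have := congrFun (congrFun hb i) j
      simpa [Matrix.transpose_apply] using this
    have haz : ∀ i, (a : Matrix (Fin 3) (Fin 3) ℝ) i i = 0 := fun i => by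
      have := ha' i i; linarith
    have hbz : ∀ i, (b : Matrix (Fin 3) (Fin 3) ℝ) i i = 0 := fun i => by
      have := hb' i i; linarith
    have hcoe : ((⁅a, b⁆ : skewAdjointMatricesLieSubalgebra
        (1 : Matrix (Fin 3) (Fin 3) ℝ)) : Matrix (Fin 3) (Fin 3) ℝ) =
        (a : Matrix (Fin 3) (Fin 3) ℝ) * b - (b : Matrix (Fin 3) (Fin 3) ℝ) * a := rfl
    have hc21 : ((⁅a, b⁆ : skewAdjointMatricesLieSubalgebra
        (1 : Matrix (Fin 3) (Fin 3) ℝ)) : Matrix (Fin 3) (Fin 3) ℝ) 2 1 =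
        (a : Matrix (Fin 3) (Fin 3) ℝ) 0 2 * (b : Matrix (Fin 3) (Fin 3) ℝ) 1 0 -
        (a : Matrix (Fin 3) (Fin 3) ℝ) 1 0 * (b : Matrix (Fin 3) (Fin 3) ℝ) 0 2 := by
      rw [hcoe]
      simp only [Matrix.sub_apply, Matrix.mul_apply, Fin.sum_univ_three]
      simp only [ha' 0 1, ha' 0 2, ha' 1 2, hb' 0 1, hb' 0 2, hb' 1 2, haz, hbz]
      ring
    have hc02 : ((⁅a, b⁆ : skewAdjointMatricesLieSubalgebra
        (1 : Matrix (Fin 3) (Fin 3) ℝ)) : Matrix (Fin 3) (Fin 3) ℝ) 0 2 =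
        (a : Matrix (Fin 3) (Fin 3) ℝ) 1 0 * (b : Matrix (Fin 3) (Fin 3) ℝ) 2 1 -
        (a : Matrix (Fin 3) (Fin 3) ℝ) 2 1 * (b : Matrix (Fin 3) (Fin 3) ℝ) 1 0 := by
      rw [hcoe]
      simp only [Matrix.sub_apply, Matrix.mul_apply, Fin.sum_univ_three]
      simp only [ha' 0 1, ha' 0 2, ha' 1 2, hb' 0 1, hb' 0 2, hb' 1 2, haz, hbz]
      ring
    have hc10 : ((⁅a, b⁆ : skewAdjointMatricesLieSubalgebra
        (1 : Matrix (Fin 3) (Fin 3) ℝ)) : Matrix (Fin 3) (Fin 3) ℝ) 1 0 =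
        (a : Matrix (Fin 3) (Fin 3) ℝ) 2 1 * (b : Matrix (Fin 3) (Fin 3) ℝ) 0 2 -
        (a : Matrix (Fin 3) (Fin 3) ℝ) 0 2 * (b : Matrix (Fin 3) (Fin 3) ℝ) 2 1 := by
      rw [hcoe]
      simp only [Matrix.sub_apply, Matrix.mul_apply, Fin.sum_univ_three]
      simp only [ha' 0 1, ha' 0 2, ha' 1 2, hb' 0 1, hb' 0 2, hb' 1 2, haz, hbz]
      ring
    show _ • Xm + _ • Ym + _ • Zm = ⁅_ • Xm + _ • Ym + _ • Zm, _ • Xm + _ • Ym + _ • Zm⁆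
    rw [hc21, hc02, hc10]
    simp only [lie_add, add_lie, lie_smul, smul_lie, bXY, bYZ, bZX, bYX, bXZ, bZY,
      lie_self, smul_zero, smul_neg]
    module

/-- With `X = (1/4)(A₁₂₃+A₂₃₄+A₁₃₄+A₁₂₄)`, `Y = (1/4)(A₁₂₃+A₂₃₄−A₁₃₄−A₁₂₄)`,
`Z = −(1/4)(A₁₂₃−A₂₃₄−A₁₃₄+A₁₂₄)` one has `[X,Y] = Z`, `[Z,X] = Y`,
`[Y,Z] = X`, so the span of `{A₁₂₃,A₂₃₄,A₁₃₄,A₁₂₄}` is a Lie algebra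
isomorphic to `𝔰𝔬(3)`. -/
theorem span_A_iso_so3 :
    let A₁₂₃ := Eso4 0 1 - Eso4 0 2 + Eso4 1 2
    let A₂₃₄ := Eso4 1 2 - Eso4 1 3 + Eso4 2 3
    let A₁₃₄ := Eso4 0 2 - Eso4 0 3 + Eso4 2 3
    let A₁₂₄ := Eso4 0 1 - Eso4 0 3 + Eso4 1 3
    let X := (1 / 4 : ℝ) • (A₁₂₃ + A₂₃₄ + A₁₃₄ + A₁₂₄)
    let Y := (1 / 4 : ℝ) • (A₁₂₃ + A₂₃₄ - A₁₃₄ - A₁₂₄)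
    let Z := -((1 / 4 : ℝ) • (A₁₂₃ - A₂₃₄ - A₁₃₄ + A₁₂₄))
    X * Y - Y * X = Z ∧ Z * X - X * Z = Y ∧ Y * Z - Z * Y = X ∧
      Nonempty
        ((LieSubalgebra.lieSpan ℝ (Matrix (Fin 4) (Fin 4) ℝ)
            ({A₁₂₃, A₂₃₄, A₁₃₄, A₁₂₄} : Set (Matrix (Fin 4) (Fin 4) ℝ))) ≃ₗ⁅ℝ⁆
          (skewAdjointMatricesLieSubalgebra
            (1 : Matrix (Fin 3) (Fin 3) ℝ))) := by
  intro A₁₂₃ A₂₃₄ A₁₃₄ A₁₂₄ X Y Z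
  have hX : X = Xm := by
    show (1 / 4 : ℝ) • (A₁₂₃ + A₂₃₄ + A₁₃₄ + A₁₂₄) = Xm
    rw [show A₁₂₃ = Xm + Ym - Zm from eqA123, show A₂₃₄ = Xm + Ym + Zm from eqA234,
      show A₁₃₄ = Xm - Ym + Zm from eqA134, show A₁₂₄ = Xm - Ym - Zm from eqA124]
    module
  have hY : Y = Ym := by
    show (1 / 4 : ℝ) • (A₁₂₃ + A₂₃₄ - A₁₃₄ - A₁₂₄) = Ym
    rw [show A₁₂₃ = Xm + Ym - Zm from eqA123, show A₂₃₄ = Xm + Ym + Zm from eqA234,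
      show A₁₃₄ = Xm - Ym + Zm from eqA134, show A₁₂₄ = Xm - Ym - Zm from eqA124]
    module
  have hZ : Z = Zm := by
    show -((1 / 4 : ℝ) • (A₁₂₃ - A₂₃₄ - A₁₃₄ + A₁₂₄)) = Zm
    rw [show A₁₂₃ = Xm + Ym - Zm from eqA123, show A₂₃₄ = Xm + Ym + Zm from eqA234,
      show A₁₃₄ = Xm - Ym + Zm from eqA134, show A₁₂₄ = Xm - Ym - Zm from eqA124]
    module
  refine ⟨by rw [hX, hY, hZ]; exact lXY, by rw [hX, hY, hZ]; exact lZX,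
    by rw [hX, hY, hZ]; exact lYZ, ?_⟩
  set T := LieSubalgebra.lieSpan ℝ (Matrix (Fin 4) (Fin 4) ℝ)
    ({A₁₂₃, A₂₃₄, A₁₃₄, A₁₂₄} : Set (Matrix (Fin 4) (Fin 4) ℝ)) with hT
  -- injectivity of φ
  have hinj : Function.Injective φ := by
    intro a b hab
    have ha : (a : Matrix (Fin 3) (Fin 3) ℝ)ᵀ = -(a : Matrix (Fin 3) (Fin 3) ℝ) :=
      (mem_skew_iff _).mp a.2
    have hb : (b : Matrix (Fin 3) (Fin 3) ℝ)ᵀ = -(b : Matrix (Fin 3) (Fin 3) ℝ) :=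
      (mem_skew_iff _).mp b.2
    have ha' : ∀ i j, (a : Matrix (Fin 3) (Fin 3) ℝ) j i =
        -((a : Matrix (Fin 3) (Fin 3) ℝ) i j) := fun i j => by
      have := congrFun (congrFun ha i) j
      simpa [Matrix.transpose_apply] using this
    have hb' : ∀ i j, (b : Matrix (Fin 3) (Fin 3) ℝ) j i =
        -((b : Matrix (Fin 3) (Fin 3) ℝ) i j) := fun i j => by
      have := congrFun (congrFun hb i) j
      simpa [Matrix.transpose_apply] using this
    have hφ : (a : Matrix (Fin 3) (Fin 3) ℝ) 2 1 • Xm +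
        (a : Matrix (Fin 3) (Fin 3) ℝ) 0 2 • Ym +
        (a : Matrix (Fin 3) (Fin 3) ℝ) 1 0 • Zm =
        (b : Matrix (Fin 3) (Fin 3) ℝ) 2 1 • Xm +
        (b : Matrix (Fin 3) (Fin 3) ℝ) 0 2 • Ym +
        (b : Matrix (Fin 3) (Fin 3) ℝ) 1 0 • Zm := hab
    have h01 := congrFun (congrFun hφ 0) 1
    have h02 := congrFun (congrFun hφ 0) 2
    have h12 := congrFun (congrFun hφ 1) 2
    simp [Xm, Ym, Zm, Matrix.add_apply, Matrix.smul_apply, Matrix.vecHead,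
      Matrix.vecTail] at h01 h02 h12
    have e1 : (a : Matrix (Fin 3) (Fin 3) ℝ) 2 1 = (b : Matrix (Fin 3) (Fin 3) ℝ) 2 1 := by
      linarith
    have e2 : (a : Matrix (Fin 3) (Fin 3) ℝ) 0 2 = (b : Matrix (Fin 3) (Fin 3) ℝ) 0 2 := by
      linarith
    have e3 : (a : Matrix (Fin 3) (Fin 3) ℝ) 1 0 = (b : Matrix (Fin 3) (Fin 3) ℝ) 1 0 := by
      linarith
    have haz : ∀ i, (a : Matrix (Fin 3) (Fin 3) ℝ) i i = 0 := fun i => by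
      have := ha' i i; linarith
    have hbz : ∀ i, (b : Matrix (Fin 3) (Fin 3) ℝ) i i = 0 := fun i => by
      have := hb' i i; linarith
    have e1' : (a : Matrix (Fin 3) (Fin 3) ℝ) 1 2 = (b : Matrix (Fin 3) (Fin 3) ℝ) 1 2 := by
      rw [ha' 2 1, hb' 2 1, e1]
    have e2' : (a : Matrix (Fin 3) (Fin 3) ℝ) 2 0 = (b : Matrix (Fin 3) (Fin 3) ℝ) 2 0 := by
      rw [ha' 0 2, hb' 0 2, e2]
    have e3' : (a : Matrix (Fin 3) (Fin 3) ℝ) 0 1 = (b : Matrix (Fin 3) (Fin 3) ℝ) 0 1 := by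
      rw [ha' 1 0, hb' 1 0, e3]
    have z1 := haz 0; have z2 := haz 1; have z3 := haz 2
    have w1 := hbz 0; have w2 := hbz 1; have w3 := hbz 2
    clear ha' hb' haz hbz ha hb hφ hab h01 h02 h12
    apply Subtype.ext
    ext i j
    fin_cases i <;> fin_cases j <;> simp_all
  -- every value of φ lands in T, and generators are in the range of φ
  have hXmem : ∀ x1 x2 x3 : ℝ, x1 • Xm + x2 • Ym + x3 • Zm ∈ φ.range := by
    intro x1 x2 x3
    refine ⟨⟨!![0, -x3, x2; x3, 0, -x1; -x2, x1, 0], ?_⟩, ?_⟩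
    · rw [mem_skew_iff]
      ext i j
      fin_cases i <;> fin_cases j <;>
        simp [Matrix.transpose_apply, Matrix.neg_apply, Matrix.vecHead, Matrix.vecTail]
    · show (!![0, -x3, x2; x3, 0, -x1; -x2, x1, 0] : Matrix (Fin 3) (Fin 3) ℝ) 2 1 • Xm +
        (!![0, -x3, x2; x3, 0, -x1; -x2, x1, 0] : Matrix (Fin 3) (Fin 3) ℝ) 0 2 • Ym +
        (!![0, -x3, x2; x3, 0, -x1; -x2, x1, 0] : Matrix (Fin 3) (Fin 3) ℝ) 1 0 • Zm =
        x1 • Xm + x2 • Ym + x3 • Zm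
      simp [Matrix.vecHead, Matrix.vecTail]
  have hrange : φ.range = T := by
    apply le_antisymm
    · rintro x ⟨a, rfl⟩
      have hmemT : ∀ m ∈ ({A₁₂₃, A₂₃₄, A₁₃₄, A₁₂₄} :
          Set (Matrix (Fin 4) (Fin 4) ℝ)), m ∈ T := fun m hm =>
        LieSubalgebra.subset_lieSpan hm
      have h1 : A₁₂₃ ∈ T := hmemT _ (by simp)
      have h2 : A₂₃₄ ∈ T := hmemT _ (by simp)
      have h3 : A₁₃₄ ∈ T := hmemT _ (by simp)
      have h4 : A₁₂₄ ∈ T := hmemT _ (by simp)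
      have hXT : Xm ∈ T := by
        rw [← hX]
        exact T.smul_mem _ (T.add_mem (T.add_mem (T.add_mem h1 h2) h3) h4)
      have hYT : Ym ∈ T := by
        rw [← hY]
        exact T.smul_mem _ (T.sub_mem (T.sub_mem (T.add_mem h1 h2) h3) h4)
      have hZT : Zm ∈ T := by
        rw [← hZ]
        exact T.neg_mem (T.smul_mem _
          (T.add_mem (T.sub_mem (T.sub_mem h1 h2) h3) h4))
      show (a : Matrix (Fin 3) (Fin 3) ℝ) 2 1 • Xm +
        (a : Matrix (Fin 3) (Fin 3) ℝ) 0 2 • Ym +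
        (a : Matrix (Fin 3) (Fin 3) ℝ) 1 0 • Zm ∈ T
      exact T.add_mem (T.add_mem (T.smul_mem _ hXT) (T.smul_mem _ hYT)) (T.smul_mem _ hZT)
    · rw [hT, LieSubalgebra.lieSpan_le]
      intro x hx
      simp only [Set.mem_insert_iff, Set.mem_singleton_iff] at hx
      rcases hx with rfl | rfl | rfl | rfl
      · have : A₁₂₃ = (1 : ℝ) • Xm + (1 : ℝ) • Ym + (-1 : ℝ) • Zm := by
          rw [show A₁₂₃ = Xm + Ym - Zm from eqA123]; module
        rw [this]; exact hXmem 1 1 (-1)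
      · have : A₂₃₄ = (1 : ℝ) • Xm + (1 : ℝ) • Ym + (1 : ℝ) • Zm := by
          rw [show A₂₃₄ = Xm + Ym + Zm from eqA234]; module
        rw [this]; exact hXmem 1 1 1
      · have : A₁₃₄ = (1 : ℝ) • Xm + (-1 : ℝ) • Ym + (1 : ℝ) • Zm := by
          rw [show A₁₃₄ = Xm - Ym + Zm from eqA134]; module
        rw [this]; exact hXmem 1 (-1) 1
      · have : A₁₂₄ = (1 : ℝ) • Xm + (-1 : ℝ) • Ym + (-1 : ℝ) • Zm := by
          rw [show A₁₂₄ = Xm - Ym - Zm from eqA124]; module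
        rw [this]; exact hXmem 1 (-1) (-1)
  exact ⟨((φ.equivRangeOfInjective hinj).trans
    (LieEquiv.ofEq _ _ (by rw [hrange]))).symm⟩
end
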